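/- Let G be a tripartite simple graph on n vertices with 3/10 ≤ e(G)/n² ≤ 1/3. Then t_max(G) ≥ e(G) − 2n²/9. -/
import Mathlib

open Finset

/-- The triangle-degree of a vertex `x` in a simple graph `G`: the number of
unordered triples of pairwise adjacent vertices containing `x`. -/
noncomputable def triDeg {V : Type*} (G : SimpleGraph V) (x : V) : ℕ :=
  {t : Finset V | t.card = 3 ∧ x ∈ t ∧ ∀ a ∈ t, ∀ b ∈ t, a ≠ b → G.Adj a b}.ncard

/-- The maximum triangle-degree of a simple graph. -/
noncomputable def tmax {V : Type*} (G : SimpleGraph V) : ℕ :=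
  sSup (Set.range (triDeg G))

/-- A graph is tripartite if its vertex set can be partitioned into three
independent sets, i.e. it admits a proper 3-colouring. -/
def Tripartite {V : Type*} (G : SimpleGraph V) : Prop :=
  ∃ c : V → Fin 3, ∀ x y, G.Adj x y → c x ≠ c y

lemma natprod (a b p r : ℕ) (h1 : a ≤ p) (h2 : b ≤ r) : r*a + p*b ≤ a*b + p*r := by
  zify at h1 h2 ⊢
  nlinarith [mul_nonneg (sub_nonneg.2 h1) (sub_nonneg.2 h2)]

lemma tri_le_tmax {V : Type*} [Fintype V] (G : SimpleGraph V) (x : V) :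
    triDeg G x ≤ tmax G :=
  le_csSup (Set.finite_range _).bddAbove ⟨x, rfl⟩

lemma esym {V : Type*} [Fintype V] [DecidableEq V] (G : SimpleGraph V) [DecidableRel G.Adj]
    (s t : Finset V) :
    ∑ u ∈ s, (t.filter (G.Adj u)).card = ∑ w ∈ t, (s.filter (G.Adj w)).card := by
  simp only [Finset.card_filter]
  rw [Finset.sum_comm]
  exact Finset.sum_congr rfl fun w _ => Finset.sum_congr rfl fun u _ =>
    if_congr (G.adj_comm u w) rfl rfl

lemma part_bound {V : Type*} [Fintype V] [DecidableEq V] (G : SimpleGraph V) [DecidableRel G.Adj]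
    (P Q R : Finset V) (hPQ : Disjoint P Q) (hPR : Disjoint P R) (hQR : Disjoint Q R) :
    R.card * (∑ u ∈ Q, (P.filter (G.Adj u)).card)
      + Q.card * (∑ w ∈ R, (P.filter (G.Adj w)).card)
      + P.card * (∑ w ∈ R, (Q.filter (G.Adj w)).card)
    ≤ P.card * tmax G + 2 * (P.card * Q.card * R.card) := by
  classical
  -- Tx : for x ∈ P, number of adjacent pairs (u,w) ∈ Q×R both adjacent to x
  set T : V → ℕ := fun x =>
    ((Q ×ˢ R).filter (fun pr => G.Adj pr.1 pr.2 ∧ G.Adj pr.1 x ∧ G.Adj pr.2 x)).card with hT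
  -- Step A : T x ≤ triDeg x for x ∈ P
  have hstepA : ∀ x ∈ P, T x ≤ triDeg G x := by
    intro x hx
    have hxQ : ∀ u ∈ Q, x ≠ u := fun u hu h => (Finset.disjoint_left.1 hPQ hx) (h ▸ hu)
    have hxR : ∀ w ∈ R, x ≠ w := fun w hw h => (Finset.disjoint_left.1 hPR hx) (h ▸ hw)
    have hQR' : ∀ u ∈ Q, ∀ w ∈ R, u ≠ w :=
      fun u hu w hw h => (Finset.disjoint_left.1 hQR hu) (h ▸ hw)
    set F := (Q ×ˢ R).filter (fun pr => G.Adj pr.1 pr.2 ∧ G.Adj pr.1 x ∧ G.Adj pr.2 x) with hF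
    have hmemF : ∀ pr ∈ F, pr.1 ∈ Q ∧ pr.2 ∈ R ∧ G.Adj pr.1 pr.2 ∧ G.Adj pr.1 x ∧ G.Adj pr.2 x := by
      intro pr hpr
      rw [hF, Finset.mem_filter, Finset.mem_product] at hpr
      exact ⟨hpr.1.1, hpr.1.2, hpr.2⟩
    have hinj : Set.InjOn (fun pr : V × V => ({x, pr.1, pr.2} : Finset V)) F := by
      intro pr hpr pr' hpr' heq
      obtain ⟨h1, h2, h3, h4, h5⟩ := hmemF pr (Finset.mem_coe.1 hpr)
      obtain ⟨h1', h2', h3', h4', h5'⟩ := hmemF pr' (Finset.mem_coe.1 hpr')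
      have heq' : ({x, pr.1, pr.2} : Finset V) = {x, pr'.1, pr'.2} := heq
      have e1 : pr.1 ∈ ({x, pr'.1, pr'.2} : Finset V) := by
        rw [← heq']; simp
      have e2 : pr.2 ∈ ({x, pr'.1, pr'.2} : Finset V) := by
        rw [← heq']; simp
      simp only [Finset.mem_insert, Finset.mem_singleton] at e1 e2
      have q1 : pr.1 = pr'.1 := by
        rcases e1 with h | h | h
        · exact absurd h.symm (hxQ _ h1)
        · exact h
        · exact absurd h (hQR' _ h1 _ h2')
      have q2 : pr.2 = pr'.2 := by
        rcases e2 with h | h | h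
        · exact absurd h.symm (hxR _ h2)
        · exact absurd h.symm (hQR' _ h1' _ h2)
        · exact h
      exact Prod.ext q1 q2
    have himg : ↑(F.image (fun pr : V × V => ({x, pr.1, pr.2} : Finset V)))
        ⊆ {t : Finset V | t.card = 3 ∧ x ∈ t ∧ ∀ a ∈ t, ∀ b ∈ t, a ≠ b → G.Adj a b} := by
      intro s hs
      simp only [Finset.coe_image, Set.mem_image, Finset.mem_coe] at hs
      obtain ⟨pr, hpr, rfl⟩ := hs
      obtain ⟨h1, h2, h3, h4, h5⟩ := hmemF pr hpr
      refine ⟨?_, by simp, ?_⟩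
      · exact Finset.card_eq_three.2 ⟨x, pr.1, pr.2, hxQ _ h1, hxR _ h2, hQR' _ h1 _ h2, rfl⟩
      · intro a ha b hb hab
        simp only [Finset.mem_insert, Finset.mem_singleton] at ha hb
        rcases ha with rfl | rfl | rfl <;> rcases hb with rfl | rfl | rfl <;>
          first
            | exact absurd rfl hab
            | exact h3 | exact h3.symm | exact h4 | exact h4.symm | exact h5 | exact h5.symm
    calc T x = (F.image (fun pr : V × V => ({x, pr.1, pr.2} : Finset V))).card := by
          rw [hT]
          exact (Finset.card_image_of_injOn hinj).symm
      _ ≤ triDeg G x := by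
          rw [triDeg, ← Set.ncard_coe_finset]
          exact Set.ncard_le_ncard himg (Set.toFinite _)
  -- Step B : swap sums
  have hswap : ∑ x ∈ P, T x
      = ∑ u ∈ Q, ∑ w ∈ R, (if G.Adj u w then (P.filter (fun x => G.Adj u x ∧ G.Adj w x)).card else 0) := by
    calc ∑ x ∈ P, T x
        = ∑ x ∈ P, ∑ u ∈ Q, ∑ w ∈ R, (if G.Adj u w ∧ G.Adj u x ∧ G.Adj w x then 1 else 0) := by
          refine Finset.sum_congr rfl fun x hx => ?_
          rw [hT]
          dsimp only
          rw [Finset.card_filter, Finset.sum_product]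
      _ = ∑ u ∈ Q, ∑ w ∈ R, ∑ x ∈ P, (if G.Adj u w ∧ G.Adj u x ∧ G.Adj w x then 1 else 0) := by
          rw [Finset.sum_comm]
          exact Finset.sum_congr rfl fun u _ => Finset.sum_comm
      _ = ∑ u ∈ Q, ∑ w ∈ R, (if G.Adj u w then (P.filter (fun x => G.Adj u x ∧ G.Adj w x)).card else 0) := by
          refine Finset.sum_congr rfl fun u _ => Finset.sum_congr rfl fun w _ => ?_
          by_cases h : G.Adj u w
          · simp only [h, true_and, if_true, Finset.card_filter]
          · simp [h]
  -- pointwise codegree bound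
  have hcod : ∀ u w : V, (if G.Adj u w then (P.filter (fun x => G.Adj u x ∧ G.Adj w x)).card else 0)
      + (if G.Adj u w then P.card else 0)
      ≥ (if G.Adj u w then (P.filter (G.Adj u)).card + (P.filter (G.Adj w)).card else 0) := by
    intro u w
    by_cases h : G.Adj u w
    · simp only [h, if_true, ge_iff_le]
      have hun : (P.filter (G.Adj u)) ∪ (P.filter (G.Adj w)) ⊆ P :=
        Finset.union_subset (Finset.filter_subset _ _) (Finset.filter_subset _ _)
      have h1 := Finset.card_union_add_card_inter (P.filter (G.Adj u)) (P.filter (G.Adj w))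
      have h2 := Finset.card_le_card hun
      have h3 : (P.filter (fun x => G.Adj u x ∧ G.Adj w x))
          = (P.filter (G.Adj u)) ∩ (P.filter (G.Adj w)) := Finset.filter_and _ _ _
      rw [h3]
      omega
    · simp [h]
  -- convert Q-filter orientation
  have hQconv : ∀ w : V, (Q.filter (fun u => G.Adj u w)) = (Q.filter (G.Adj w)) := by
    intro w
    apply Finset.filter_congr
    intro u _
    rw [G.adj_comm]
  -- top bound
  have hTtop : ∑ x ∈ P, T x ≤ P.card * tmax G :=
    calc ∑ x ∈ P, T x ≤ ∑ x ∈ P, triDeg G x := Finset.sum_le_sum hstepA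
      _ ≤ ∑ _x ∈ P, tmax G := Finset.sum_le_sum (fun x _ => tri_le_tmax G x)
      _ = P.card * tmax G := by rw [Finset.sum_const, smul_eq_mul]
  -- the middle inequality
  have hsum1 : ∑ u ∈ Q, ∑ w ∈ R, (if G.Adj u w then (P.filter (G.Adj u)).card + (P.filter (G.Adj w)).card else 0)
      ≤ (∑ x ∈ P, T x) + P.card * (∑ u ∈ Q, (R.filter (G.Adj u)).card) := by
    rw [hswap]
    have step : ∑ u ∈ Q, ∑ w ∈ R, (if G.Adj u w then (P.filter (G.Adj u)).card + (P.filter (G.Adj w)).card else 0)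
        ≤ ∑ u ∈ Q, ∑ w ∈ R, ((if G.Adj u w then (P.filter (fun x => G.Adj u x ∧ G.Adj w x)).card else 0)
            + (if G.Adj u w then P.card else 0)) :=
      Finset.sum_le_sum fun u _ => Finset.sum_le_sum fun w _ => hcod u w
    have split2 : ∑ u ∈ Q, ∑ w ∈ R, ((if G.Adj u w then (P.filter (fun x => G.Adj u x ∧ G.Adj w x)).card else 0)
            + (if G.Adj u w then P.card else 0))
        = (∑ u ∈ Q, ∑ w ∈ R, (if G.Adj u w then (P.filter (fun x => G.Adj u x ∧ G.Adj w x)).card else 0))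
          + P.card * (∑ u ∈ Q, (R.filter (G.Adj u)).card) := by
      rw [Finset.mul_sum]
      rw [← Finset.sum_add_distrib]
      refine Finset.sum_congr rfl fun u _ => ?_
      rw [Finset.sum_add_distrib]
      congr 1
      rw [← Finset.sum_filter (fun w => G.Adj u w) (fun _ => P.card), Finset.sum_const, smul_eq_mul,
        mul_comm]
    calc _ ≤ _ := step
      _ = _ := split2
  -- split the LHS of hsum1 into two product sums
  have hsplit : ∑ u ∈ Q, ∑ w ∈ R, (if G.Adj u w then (P.filter (G.Adj u)).card + (P.filter (G.Adj w)).card else 0)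
      = (∑ u ∈ Q, (P.filter (G.Adj u)).card * (R.filter (G.Adj u)).card)
        + (∑ w ∈ R, (P.filter (G.Adj w)).card * (Q.filter (G.Adj w)).card) := by
    have e1 : ∀ u ∈ Q, ∑ w ∈ R, (if G.Adj u w then (P.filter (G.Adj u)).card else 0)
        = (P.filter (G.Adj u)).card * (R.filter (G.Adj u)).card := by
      intro u _
      rw [← Finset.sum_filter (fun w => G.Adj u w) (fun _ => (P.filter (G.Adj u)).card),
        Finset.sum_const, smul_eq_mul, mul_comm]
    have e2 : ∑ u ∈ Q, ∑ w ∈ R, (if G.Adj u w then (P.filter (G.Adj w)).card else 0)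
        = ∑ w ∈ R, (P.filter (G.Adj w)).card * (Q.filter (G.Adj w)).card := by
      rw [Finset.sum_comm]
      refine Finset.sum_congr rfl fun w _ => ?_
      rw [← Finset.sum_filter (fun u => G.Adj u w) (fun _ => (P.filter (G.Adj w)).card),
        Finset.sum_const, smul_eq_mul, hQconv w, mul_comm]
    calc ∑ u ∈ Q, ∑ w ∈ R, (if G.Adj u w then (P.filter (G.Adj u)).card + (P.filter (G.Adj w)).card else 0)
        = ∑ u ∈ Q, ∑ w ∈ R, ((if G.Adj u w then (P.filter (G.Adj u)).card else 0)
            + (if G.Adj u w then (P.filter (G.Adj w)).card else 0)) := by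
          refine Finset.sum_congr rfl fun u _ => Finset.sum_congr rfl fun w _ => ?_
          by_cases h : G.Adj u w <;> simp [h]
      _ = (∑ u ∈ Q, ∑ w ∈ R, (if G.Adj u w then (P.filter (G.Adj u)).card else 0))
          + ∑ u ∈ Q, ∑ w ∈ R, (if G.Adj u w then (P.filter (G.Adj w)).card else 0) := by
          rw [← Finset.sum_add_distrib]
          exact Finset.sum_congr rfl fun u _ => Finset.sum_add_distrib
      _ = _ := by rw [Finset.sum_congr rfl e1, e2]
  -- degree-product bounds
  have hd1 : R.card * (∑ u ∈ Q, (P.filter (G.Adj u)).card) + P.card * (∑ u ∈ Q, (R.filter (G.Adj u)).card)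
      ≤ (∑ u ∈ Q, (P.filter (G.Adj u)).card * (R.filter (G.Adj u)).card) + Q.card * (P.card * R.card) := by
    rw [Finset.mul_sum, Finset.mul_sum, ← Finset.sum_add_distrib]
    calc ∑ u ∈ Q, (R.card * (P.filter (G.Adj u)).card + P.card * (R.filter (G.Adj u)).card)
        ≤ ∑ u ∈ Q, ((P.filter (G.Adj u)).card * (R.filter (G.Adj u)).card + P.card * R.card) :=
          Finset.sum_le_sum fun u _ => natprod _ _ _ _
            (Finset.card_le_card (Finset.filter_subset _ _)) (Finset.card_le_card (Finset.filter_subset _ _))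
      _ = _ := by rw [Finset.sum_add_distrib, Finset.sum_const, smul_eq_mul]
  have hd2 : Q.card * (∑ w ∈ R, (P.filter (G.Adj w)).card) + P.card * (∑ w ∈ R, (Q.filter (G.Adj w)).card)
      ≤ (∑ w ∈ R, (P.filter (G.Adj w)).card * (Q.filter (G.Adj w)).card) + R.card * (P.card * Q.card) := by
    rw [Finset.mul_sum, Finset.mul_sum, ← Finset.sum_add_distrib]
    calc ∑ w ∈ R, (Q.card * (P.filter (G.Adj w)).card + P.card * (Q.filter (G.Adj w)).card)
        ≤ ∑ w ∈ R, ((P.filter (G.Adj w)).card * (Q.filter (G.Adj w)).card + P.card * Q.card) :=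
          Finset.sum_le_sum fun w _ => natprod _ _ _ _
            (Finset.card_le_card (Finset.filter_subset _ _)) (Finset.card_le_card (Finset.filter_subset _ _))
      _ = _ := by rw [Finset.sum_add_distrib, Finset.sum_const, smul_eq_mul]
  -- combine everything
  have hmid := hsum1
  rw [hsplit] at hmid
  -- now linear arithmetic over ℕ with monomial atoms
  have := hTtop
  nlinarith [hd1, hd2, hmid, hTtop]

lemma keylem (p q r epq epr eqr t N : ℝ) (hp : 0 ≤ p) (hpq : p ≤ q) (hqr : q ≤ r)
    (hn : p + q + r = N)
    (h1 : 0 ≤ epq) (h1' : epq ≤ p*q) (h2 : 0 ≤ epr) (h2' : epr ≤ p*r)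
    (h3 : 0 ≤ eqr) (h3' : eqr ≤ q*r)
    (hden : 3*N^2/10 ≤ epq + epr + eqr) (ht : 0 ≤ t)
    (hA : r*epq + q*epr + p*eqr ≤ p*t + 2*(p*q*r)) :
    epq + epr + eqr - 2*N^2/9 ≤ t := by
  subst hn
  have hq : 0 ≤ q := hp.trans hpq
  have hr : 0 ≤ r := hq.trans hqr
  rcases eq_or_lt_of_le hp with hp0 | hp0
  · have : epq ≤ 0 := by nlinarith
    have : epr ≤ 0 := by nlinarith
    nlinarith [sq_nonneg (q - r)]
  · have quart : 2*p*q*r ≤ (q-p)*(3*(p+q+r)^2/10 - q*r)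
        + (r-q)*(3*(p+q+r)^2/10 - p*r - q*r) + 2*p*(p+q+r)^2/9 := by
      nlinarith [mul_nonneg hp (sub_nonneg.2 hpq), mul_nonneg hp (sub_nonneg.2 hqr),
        mul_nonneg (sub_nonneg.2 hpq) (sub_nonneg.2 hqr),
        sq_nonneg (p-q), sq_nonneg (q-r), sq_nonneg (p-r), sq_nonneg (p+q-2*r),
        sq_nonneg (q+r-2*p),
        mul_nonneg (mul_nonneg hp hp) hp,
        mul_nonneg (mul_nonneg hp (sub_nonneg.2 hpq)) (sub_nonneg.2 hqr)]
    have hkey : p * (epq + epr + eqr - 2*(p+q+r)^2/9) ≤ p * t := by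
      nlinarith [quart, hA,
        mul_nonneg (sub_nonneg.2 hpq) (sub_nonneg.2 hden),
        mul_nonneg (sub_nonneg.2 hpq) (sub_nonneg.2 h3'),
        mul_nonneg (sub_nonneg.2 hqr) (sub_nonneg.2 hden),
        mul_nonneg (sub_nonneg.2 hqr) (sub_nonneg.2 h2'),
        mul_nonneg (sub_nonneg.2 hqr) (sub_nonneg.2 h3')]
    exact le_of_mul_le_mul_left hkey hp0

lemma numeric (a0 a1 a2 e01 e02 e12 t N : ℝ)
    (ha0 : 0 ≤ a0) (ha1 : 0 ≤ a1) (ha2 : 0 ≤ a2) (ht : 0 ≤ t)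
    (he01 : 0 ≤ e01) (he02 : 0 ≤ e02) (he12 : 0 ≤ e12)
    (hc01 : e01 ≤ a0*a1) (hc02 : e02 ≤ a0*a2) (hc12 : e12 ≤ a1*a2)
    (hN : a0 + a1 + a2 = N)
    (hden : 3*N^2/10 ≤ e01 + e02 + e12)
    (h0 : a2*e01 + a1*e02 + a0*e12 ≤ a0*t + 2*(a0*a1*a2))
    (h1 : a2*e01 + a1*e02 + a0*e12 ≤ a1*t + 2*(a0*a1*a2))
    (h2 : a2*e01 + a1*e02 + a0*e12 ≤ a2*t + 2*(a0*a1*a2)) :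
    e01 + e02 + e12 - 2*N^2/9 ≤ t := by
  rcases le_total a0 a1 with h01 | h01 <;> rcases le_total a0 a2 with h02 | h02 <;>
    rcases le_total a1 a2 with h12 | h12
  · have := keylem a0 a1 a2 e01 e02 e12 t N (by linarith) (by linarith) (by linarith)
      (by linarith) (by linarith) (by linarith) (by linarith) (by linarith) (by linarith)
      (by linarith) (by linarith) (by linarith) (by linarith); linarith
  · have := keylem a0 a2 a1 e02 e01 e12 t N (by linarith) (by linarith) (by linarith)
      (by linarith) (by linarith) (by linarith) (by linarith) (by linarith) (by linarith)
      (by linarith) (by linarith) (by linarith) (by linarith); linarith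
  · have := keylem a2 a0 a1 e02 e12 e01 t N (by linarith) (by linarith) (by linarith)
      (by linarith) (by linarith) (by linarith) (by linarith) (by linarith) (by linarith)
      (by linarith) (by linarith) (by linarith) (by linarith); linarith
  · have := keylem a2 a0 a1 e02 e12 e01 t N (by linarith) (by linarith) (by linarith)
      (by linarith) (by linarith) (by linarith) (by linarith) (by linarith) (by linarith)
      (by linarith) (by linarith) (by linarith) (by linarith); linarith
  · have := keylem a1 a0 a2 e01 e12 e02 t N (by linarith) (by linarith) (by linarith)
      (by linarith) (by linarith) (by linarith) (by linarith) (by linarith) (by linarith)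
      (by linarith) (by linarith) (by linarith) (by linarith); linarith
  · have := keylem a1 a0 a2 e01 e12 e02 t N (by linarith) (by linarith) (by linarith)
      (by linarith) (by linarith) (by linarith) (by linarith) (by linarith) (by linarith)
      (by linarith) (by linarith) (by linarith) (by linarith); linarith
  · have := keylem a1 a2 a0 e12 e01 e02 t N (by linarith) (by linarith) (by linarith)
      (by linarith) (by linarith) (by linarith) (by linarith) (by linarith) (by linarith)
      (by linarith) (by linarith) (by linarith) (by linarith); linarith
  · have := keylem a2 a1 a0 e12 e02 e01 t N (by linarith) (by linarith) (by linarith)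
      (by linarith) (by linarith) (by linarith) (by linarith) (by linarith) (by linarith)
      (by linarith) (by linarith) (by linarith) (by linarith); linarith

theorem stmt17 (n : ℕ) (G : SimpleGraph (Fin n)) (htri : Tripartite G)
    (he1 : 3 / 10 ≤ (G.edgeSet.ncard : ℝ) / n ^ 2)
    (he2 : (G.edgeSet.ncard : ℝ) / n ^ 2 ≤ 1 / 3) :
    (G.edgeSet.ncard : ℝ) - 2 * (n : ℝ) ^ 2 / 9 ≤ (tmax G : ℝ) := by
  classical
  rcases Nat.eq_zero_or_pos n with rfl | hn
  · exfalso
    norm_num at he1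
  obtain ⟨col, hcol⟩ := htri
  set A : Fin 3 → Finset (Fin n) := fun i => univ.filter (fun v => col v = i) with hA
  have hmemA : ∀ i v, v ∈ A i ↔ col v = i := by
    intro i v; rw [hA]; simp
  have hdisj : ∀ i j, i ≠ j → Disjoint (A i) (A j) := by
    intro i j hij
    rw [Finset.disjoint_left]
    intro v hv hv'
    rw [hmemA] at hv hv'
    exact hij (hv ▸ hv')
  -- cardinality sum
  have hcardsum : (A 0).card + (A 1).card + (A 2).card = n := by
    have h := Finset.card_eq_sum_card_fiberwise
      (f := col) (s := (univ : Finset (Fin n))) (t := (univ : Finset (Fin 3)))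
      (fun v _ => Finset.mem_univ _)
    rw [Finset.card_univ, Fintype.card_fin, Fin.sum_univ_three] at h
    rw [hA]
    dsimp only
    omega
  -- caps
  have hcap : ∀ i j, (∑ u ∈ A i, ((A j).filter (G.Adj u)).card) ≤ (A i).card * (A j).card := by
    intro i j
    calc ∑ u ∈ A i, ((A j).filter (G.Adj u)).card
        ≤ ∑ _u ∈ A i, (A j).card :=
          Finset.sum_le_sum fun u _ => Finset.card_le_card (Finset.filter_subset _ _)
      _ = (A i).card * (A j).card := by rw [Finset.sum_const, smul_eq_mul]
  -- diagonal is zero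
  have hEii : ∀ i, (∑ u ∈ A i, ((A i).filter (G.Adj u)).card) = 0 := by
    intro i
    apply Finset.sum_eq_zero
    intro u hu
    rw [Finset.card_eq_zero, Finset.filter_eq_empty_iff]
    intro y hy hadj
    rw [hmemA] at hu hy
    exact hcol u y hadj (hu.trans hy.symm)
  -- degree decomposition
  have hdeg : ∀ v, G.degree v = ∑ i : Fin 3, ((A i).filter (G.Adj v)).card := by
    intro v
    have h1 : G.degree v = (univ.filter (G.Adj v)).card := by
      rw [← SimpleGraph.neighborFinset_eq_filter]
      rfl
    have h2 := Finset.card_eq_sum_card_fiberwise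
      (f := col) (s := univ.filter (G.Adj v)) (t := (univ : Finset (Fin 3)))
      (fun v _ => Finset.mem_univ _)
    rw [h1, h2]
    refine Finset.sum_congr rfl fun i _ => ?_
    congr 1
    rw [hA]
    simp only [Finset.filter_filter]
    exact Finset.filter_congr fun x _ => by tauto
  -- edge count
  have hedge : G.edgeFinset.card
      = (∑ u ∈ A 0, ((A 1).filter (G.Adj u)).card)
        + (∑ u ∈ A 0, ((A 2).filter (G.Adj u)).card)
        + (∑ u ∈ A 1, ((A 2).filter (G.Adj u)).card) := by
    have h2 : ∑ v : Fin n, G.degree v = 2 * G.edgeFinset.card :=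
      G.sum_degrees_eq_twice_card_edges
    have h3 : ∑ v : Fin n, G.degree v
        = ∑ i : Fin 3, ∑ j : Fin 3, ∑ u ∈ A j, ((A i).filter (G.Adj u)).card := by
      calc ∑ v : Fin n, G.degree v
          = ∑ v : Fin n, ∑ i : Fin 3, ((A i).filter (G.Adj v)).card :=
            Finset.sum_congr rfl fun v _ => hdeg v
        _ = ∑ i : Fin 3, ∑ v : Fin n, ((A i).filter (G.Adj v)).card := Finset.sum_comm
        _ = _ := by
            refine Finset.sum_congr rfl fun i _ => ?_
            rw [← Finset.sum_fiberwise (univ : Finset (Fin n)) col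
              (fun v => ((A i).filter (G.Adj v)).card)]
    rw [h3] at h2
    rw [Fin.sum_univ_three] at h2
    simp only [Fin.sum_univ_three] at h2
    rw [hEii 0, hEii 1, hEii 2] at h2
    rw [esym G (A 1) (A 0), esym G (A 2) (A 0), esym G (A 2) (A 1)] at h2
    omega
  have hncard : G.edgeSet.ncard
      = (∑ u ∈ A 0, ((A 1).filter (G.Adj u)).card)
        + (∑ u ∈ A 0, ((A 2).filter (G.Adj u)).card)
        + (∑ u ∈ A 1, ((A 2).filter (G.Adj u)).card) := by
    rw [← SimpleGraph.coe_edgeFinset, Set.ncard_coe_finset, hedge]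
  -- the three part bounds, canonicalized
  have hP0 := part_bound G (A 0) (A 1) (A 2)
    (hdisj 0 1 (by decide)) (hdisj 0 2 (by decide)) (hdisj 1 2 (by decide))
  have hP1 := part_bound G (A 1) (A 0) (A 2)
    (hdisj 1 0 (by decide)) (hdisj 1 2 (by decide)) (hdisj 0 2 (by decide))
  have hP2 := part_bound G (A 2) (A 0) (A 1)
    (hdisj 2 0 (by decide)) (hdisj 2 1 (by decide)) (hdisj 0 1 (by decide))
  rw [esym G (A 1) (A 0), esym G (A 2) (A 0), esym G (A 2) (A 1)] at hP0
  rw [esym G (A 2) (A 1), esym G (A 2) (A 0)] at hP1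
  rw [esym G (A 1) (A 0)] at hP2
  -- abbreviate
  set a0 := (A 0).card with ha0d
  set a1 := (A 1).card with ha1d
  set a2 := (A 2).card with ha2d
  set E01 := ∑ u ∈ A 0, ((A 1).filter (G.Adj u)).card with hE01d
  set E02 := ∑ u ∈ A 0, ((A 2).filter (G.Adj u)).card with hE02d
  set E12 := ∑ u ∈ A 1, ((A 2).filter (G.Adj u)).card with hE12d
  have hcap01 := hcap 0 1
  have hcap02 := hcap 0 2
  have hcap12 := hcap 1 2
  -- tmax nonneg etc
  have htm : (0:ℝ) ≤ (tmax G : ℝ) := Nat.cast_nonneg _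
  -- density
  have hn2 : (0:ℝ) < (n:ℝ)^2 := by positivity
  rw [le_div_iff₀ hn2] at he1
  rw [hncard] at he1 ⊢
  have hcast3 : (((E01 + E02 + E12 : ℕ)):ℝ) = (E01:ℝ) + (E02:ℝ) + (E12:ℝ) := by
    push_cast; ring
  rw [hcast3] at he1 ⊢
  have hP0R : (a2:ℝ)*E01 + a1*E02 + a0*E12 ≤ a0*(tmax G:ℝ) + 2*((a0:ℝ)*a1*a2) := by
    exact_mod_cast hP0
  have hP1R : (a2:ℝ)*E01 + a0*E12 + a1*E02 ≤ a1*(tmax G:ℝ) + 2*((a1:ℝ)*a0*a2) := by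
    exact_mod_cast hP1
  have hP2R : (a1:ℝ)*E02 + a0*E12 + a2*E01 ≤ a2*(tmax G:ℝ) + 2*((a2:ℝ)*a0*a1) := by
    exact_mod_cast hP2
  have hfin := numeric (a0:ℝ) (a1:ℝ) (a2:ℝ) (E01:ℝ) (E02:ℝ) (E12:ℝ) (tmax G : ℝ) (n:ℝ)
    (Nat.cast_nonneg _) (Nat.cast_nonneg _) (Nat.cast_nonneg _) htm
    (Nat.cast_nonneg _) (Nat.cast_nonneg _) (Nat.cast_nonneg _)
    (by exact_mod_cast hcap01) (by exact_mod_cast hcap02) (by exact_mod_cast hcap12)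
    (by exact_mod_cast hcardsum)
    (by linarith)
    (by have := hP0R; linarith) (by have := hP1R; linarith) (by have := hP2R; linarith)
  linarith
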